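/- With c(t) = t·( γ₊ − ∫_{(a(t),1]} y Λ(dy) ), one has lim_{t↓0} c(t)/a(t) = α/(1−α). -/

import Mathlib

open MeasureTheory Filter Set Topology

noncomputable section

/-- Upper tail of the Lévy measure: `Λ̄₊(x) = Λ((x,∞))`. -/
def upperTail (Λ : Measure ℝ) (x : ℝ) : ℝ := (Λ (Set.Ioi x)).toReal

/-- Lower tail of the Lévy measure: `Λ̄₋(x) = Λ((−∞,−x))`. -/
def lowerTail (Λ : Measure ℝ) (x : ℝ) : ℝ := (Λ (Set.Iio (-x))).toReal

/-- `φ(u) = sup {x > 0 : Λ̄₊(x) > u}` for a general tail function `G`. -/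
def phiOf (G : ℝ → ℝ) (u : ℝ) : ℝ := sSup {x : ℝ | 0 < x ∧ G x > u}

/-- The norming function `a(t) = φ(1/t)` built from a tail function `G`. -/
def normOf (G : ℝ → ℝ) (t : ℝ) : ℝ := phiOf G (1 / t)

/-- The norming function `a(t)` of a Lévy measure. -/
def normFn (Λ : Measure ℝ) (t : ℝ) : ℝ := normOf (upperTail Λ) t

/-- `γ₊ = ∫_{(0,1]} y Λ(dy)` when finite, `0` otherwise. -/
def gammaPlus (Λ : Measure ℝ) : ℝ :=
  if (∫⁻ y in Set.Ioc (0:ℝ) 1, ENNReal.ofReal y ∂Λ) < ⊤ then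
    ∫ y in Set.Ioc (0:ℝ) 1, y ∂Λ
  else 0

/-- `γ₋ = ∫_{[−1,0)} y Λ(dy)` when `∫_{[−1,0)} |y| Λ(dy) < ∞`, `0` otherwise. -/
def gammaMinus (Λ : Measure ℝ) : ℝ :=
  if (∫⁻ y in Set.Ico (-1:ℝ) 0, ENNReal.ofReal (-y) ∂Λ) < ⊤ then
    ∫ y in Set.Ico (-1:ℝ) 0, y ∂Λ
  else 0

/-- `ℓ` is slowly varying at `0`: `ℓ(λ t)/ℓ(t) → 1` as `t ↓ 0`, for every `λ > 0`. -/
def SlowlyVaryingAtZero (ℓ : ℝ → ℝ) : Prop :=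
  ∀ lam : ℝ, 0 < lam →
    Tendsto (fun t => ℓ (lam * t) / ℓ t) (𝓝[>] (0:ℝ)) (𝓝 1)

/-- `ℓ` is super-slowly varying at `0` with auxiliary function `ξ(t) = (−log t)⁻¹`:
for some `Δ > 0`, `ℓ(t ξ(t)^δ)/ℓ(t) → 1` as `t ↓ 0`, uniformly in `δ ∈ [0,Δ]`. -/
def SuperSlowlyVaryingAtZero (ℓ : ℝ → ℝ) : Prop :=
  ∃ Δ : ℝ, 0 < Δ ∧ ∀ ε : ℝ, 0 < ε → ∃ t₀ : ℝ, 0 < t₀ ∧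
    ∀ t : ℝ, 0 < t → t < t₀ → ∀ δ : ℝ, 0 ≤ δ → δ ≤ Δ →
      |ℓ (t * ((-Real.log t)⁻¹) ^ δ) / ℓ t - 1| < ε

/-- A real-valued Lévy process without Gaussian component, with drift `γ` and
Lévy measure `Λ`: càdlàg paths starting at `0`, stationary independent increments,
and the Lévy–Khintchine characteristic function. -/
structure IsLevyNoGauss {Ω : Type*} [MeasurableSpace Ω] (P : Measure Ω)
    (X : ℝ → Ω → ℝ) (γ : ℝ) (Λ : Measure ℝ) : Prop where
  meas : ∀ t : ℝ, Measurable (X t)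
  init : ∀ᵐ ω ∂P, X 0 ω = 0
  right_cont : ∀ᵐ ω ∂P, ∀ t : ℝ, 0 ≤ t →
    Tendsto (fun s => X s ω) (𝓝[≥] t) (𝓝 (X t ω))
  left_lim : ∀ᵐ ω ∂P, ∀ t : ℝ, 0 < t →
    ∃ l : ℝ, Tendsto (fun s => X s ω) (𝓝[<] t) (𝓝 l)
  stationary : ∀ s t : ℝ, 0 ≤ s → 0 ≤ t →
    Measure.map (fun ω => X (s + t) ω - X s ω) P = Measure.map (X t) P
  indep : ∀ (n : ℕ) (τ : Fin (n + 1) → ℝ), (∀ i, 0 ≤ τ i) → Monotone τ →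
    ProbabilityTheory.iIndepFun (m := fun _ => Real.measurableSpace)
      (fun i : Fin n => fun ω => X (τ i.succ) ω - X (τ i.castSucc) ω) P
  levy_integrability : (∫⁻ y, ENNReal.ofReal (min 1 (y ^ 2)) ∂Λ) < ⊤
  no_atom_zero : Λ {0} = 0
  char_fun : ∀ (u t : ℝ), 0 ≤ t →
    ∫ ω, Complex.exp (Complex.I * u * X t ω) ∂P =
      Complex.exp (t * (Complex.I * γ * u +
        ∫ y : ℝ, (Complex.exp (Complex.I * u * y) - 1 -
          Complex.I * u * Set.indicator {y : ℝ | |y| ≤ 1} (fun y => (y : ℂ)) y) ∂Λ))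

variable {Ω : Type*} [MeasurableSpace Ω]

/-- Running supremum `X̄_t = sup_{0 ≤ s ≤ t} X_s`. -/
def runSup (X : ℝ → Ω → ℝ) (t : ℝ) (ω : Ω) : ℝ :=
  sSup ((fun s => X s ω) '' Set.Icc 0 t)

/-- The jump `ΔX_s = X_s − X_{s−}`. -/
def jump (X : ℝ → Ω → ℝ) (s : ℝ) (ω : Ω) : ℝ :=
  X s ω - Function.leftLim (fun u => X u ω) s

/-- Maximal jump `m_t = sup_{0 < s ≤ t} ΔX_s`. -/
def maxJump (X : ℝ → Ω → ℝ) (t : ℝ) (ω : Ω) : ℝ :=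
  sSup ((fun s => jump X s ω) '' Set.Ioc 0 t)

/-- `M_t = sup_{t ≤ s ≤ 1} m_s / a(s)`. -/
def Mproc (Λ : Measure ℝ) (X : ℝ → Ω → ℝ) (t : ℝ) (ω : Ω) : ℝ :=
  sSup ((fun s => maxJump X s ω / normFn Λ s) '' Set.Icc t 1)

/-- `Y_t = sup_{t ≤ s ≤ 1} X̄_s / a(s)`. -/
def Yproc (Λ : Measure ℝ) (X : ℝ → Ω → ℝ) (t : ℝ) (ω : Ω) : ℝ :=
  sSup ((fun s => runSup X s ω / normFn Λ s) '' Set.Icc t 1)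

/-- The `α = 1` centering function. -/
def centering (Λ : Measure ℝ) (t : ℝ) : ℝ :=
  if (∫⁻ y in Set.Ioc (0:ℝ) 1, ENNReal.ofReal y ∂Λ) < ⊤ then
    t * ∫ y in Set.Ioc (0:ℝ) (normFn Λ t), y ∂Λ
  else
    -(t * ∫ y in Set.Ioc (normFn Λ t) 1, y ∂Λ)

end

section Basics

variable {Λ : Measure ℝ}

lemma tail_lt_top (hint : (∫⁻ y, ENNReal.ofReal (min 1 (y ^ 2)) ∂Λ) < ⊤)
    {x : ℝ} (hx : 0 < x) : Λ (Set.Ioi x) < ⊤ := by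
  by_contra h
  push_neg at h
  have hx2 : (0:ℝ) < min 1 (x ^ 2) := lt_min one_pos (by positivity)
  have key : ENNReal.ofReal (min 1 (x ^ 2)) * Λ (Set.Ioi x)
      ≤ ∫⁻ y, ENNReal.ofReal (min 1 (y ^ 2)) ∂Λ := by
    rw [← setLIntegral_const (Set.Ioi x) (ENNReal.ofReal (min 1 (x ^ 2)))] at *
    refine le_trans (setLIntegral_mono' measurableSet_Ioi ?_) (setLIntegral_le_lintegral _ _)
    intro y hy
    have hxy : x < y := hy
    exact ENNReal.ofReal_le_ofReal (min_le_min le_rfl (by nlinarith))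
  rw [top_le_iff.mp h, ENNReal.mul_top (by simp only [ne_eq, ENNReal.ofReal_eq_zero, not_le]; exact hx2)] at key
  simp only [top_le_iff] at key
  exact absurd key hint.ne

lemma tail_anti (hint : (∫⁻ y, ENNReal.ofReal (min 1 (y ^ 2)) ∂Λ) < ⊤)
    {x y : ℝ} (hx : 0 < x) (hxy : x ≤ y) : upperTail Λ y ≤ upperTail Λ x :=
  ENNReal.toReal_mono (tail_lt_top hint hx).ne (measure_mono (Set.Ioi_subset_Ioi hxy))

lemma tail_nonneg (x : ℝ) : 0 ≤ upperTail Λ x := ENNReal.toReal_nonneg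

lemma tail_ofReal (hint : (∫⁻ y, ENNReal.ofReal (min 1 (y ^ 2)) ∂Λ) < ⊤)
    {x : ℝ} (hx : 0 < x) : ENNReal.ofReal (upperTail Λ x) = Λ (Set.Ioi x) :=
  ENNReal.ofReal_toReal (tail_lt_top hint hx).ne

lemma tail_diff (hint : (∫⁻ y, ENNReal.ofReal (min 1 (y ^ 2)) ∂Λ) < ⊤)
    {x b : ℝ} (hx : 0 < x) (hxb : x ≤ b) :
    (Λ (Set.Ioc x b)).toReal = upperTail Λ x - upperTail Λ b := by
  have h1 : Set.Ioi x = Set.Ioc x b ∪ Set.Ioi b := (Set.Ioc_union_Ioi_eq_Ioi hxb).symm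
  have hd : Disjoint (Set.Ioc x b) (Set.Ioi b) := by
    rw [Set.disjoint_left]
    rintro a ⟨_, h2⟩ h3
    exact absurd h3 (not_lt.mpr h2)
  have h2 : Λ (Set.Ioi x) = Λ (Set.Ioc x b) + Λ (Set.Ioi b) := by
    rw [h1, measure_union hd measurableSet_Ioi]
  have hfin : Λ (Set.Ioc x b) < ⊤ :=
    lt_of_le_of_lt (measure_mono Set.Ioc_subset_Ioi_self) (tail_lt_top hint hx)
  have hfinb : Λ (Set.Ioi b) < ⊤ := tail_lt_top hint (lt_of_lt_of_le hx hxb)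
  unfold upperTail
  rw [h2, ENNReal.toReal_add hfin.ne hfinb.ne]
  ring

lemma tail_measurable : Measurable (upperTail Λ) :=
  Measurable.ennreal_toReal (Antitone.measurable
    (fun _ _ hst ↦ measure_mono (Set.Ioi_subset_Ioi hst)))

end Basics

section SV

variable {Λ : Measure ℝ} {α : ℝ} {ℓ : ℝ → ℝ}

lemma ev_pos (hα0 : 0 < α) (hsv : SlowlyVaryingAtZero ℓ)
    (htail : ∀ x : ℝ, 0 < x → upperTail Λ x = x ^ (-α) * ℓ x) :
    ∀ᶠ x in 𝓝[>] (0:ℝ), 0 < ℓ x ∧ 0 < upperTail Λ x := by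
  have h1 := hsv 1 one_pos
  have h2 : ∀ᶠ x in 𝓝[>] (0:ℝ), ℓ x ≠ 0 := by
    filter_upwards [h1.eventually_ne (by norm_num : (1:ℝ) ≠ 0)] with x hx
    intro h0
    exact hx (by simp [h0])
  filter_upwards [h2, self_mem_nhdsWithin] with x hx hxpos
  have hG := htail x hxpos
  have hxa : (0:ℝ) < x ^ (-α) := Real.rpow_pos_of_pos hxpos _
  have hℓnn : 0 ≤ ℓ x := by
    by_contra h
    push_neg at h
    have : upperTail Λ x < 0 := by rw [hG]; exact mul_neg_of_pos_of_neg hxa h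
    exact absurd this (not_lt.mpr (tail_nonneg x))
  have hℓ : 0 < ℓ x := lt_of_le_of_ne hℓnn (Ne.symm hx)
  exact ⟨hℓ, by rw [hG]; positivity⟩

lemma ratio_tendsto (hα0 : 0 < α) (hsv : SlowlyVaryingAtZero ℓ)
    (htail : ∀ x : ℝ, 0 < x → upperTail Λ x = x ^ (-α) * ℓ x)
    {lam : ℝ} (hlam : 0 < lam) :
    Tendsto (fun x => upperTail Λ (lam * x) / upperTail Λ x) (𝓝[>] (0:ℝ))
      (𝓝 (lam ^ (-α))) := by
  have h := (hsv lam hlam).const_mul (lam ^ (-α))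
  rw [mul_one] at h
  refine Tendsto.congr' ?_ h
  filter_upwards [ev_pos hα0 hsv htail, self_mem_nhdsWithin] with x hx hxpos
  obtain ⟨hℓ, -⟩ := hx
  rw [htail x hxpos, htail (lam * x) (mul_pos hlam hxpos)]
  have h1 : (lam * x) ^ (-α) = lam ^ (-α) * x ^ (-α) := Real.mul_rpow hlam.le hxpos.le
  have h2 : x ^ (-α) ≠ 0 := (Real.rpow_pos_of_pos hxpos _).ne'
  have h3 : ℓ x ≠ 0 := hℓ.ne'
  rw [h1]
  field_simp

lemma ratio_bound (hα0 : 0 < α) (hsv : SlowlyVaryingAtZero ℓ)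
    (htail : ∀ x : ℝ, 0 < x → upperTail Λ x = x ^ (-α) * ℓ x)
    {lam : ℝ} (hlam : 0 < lam) {ε : ℝ} (hε : 0 < ε) :
    ∀ᶠ x in 𝓝[>] (0:ℝ),
      |upperTail Λ (lam * x) / upperTail Λ x - lam ^ (-α)| < ε := by
  have := Metric.tendsto_nhds.mp (ratio_tendsto hα0 hsv htail hlam) ε hε
  simpa [Real.dist_eq] using this

end SV

lemma eventually_to_Ioc {P : ℝ → Prop} (h : ∀ᶠ x in 𝓝[>] (0:ℝ), P x) :
    ∃ x₀ > 0, ∀ x ∈ Set.Ioc (0:ℝ) x₀, P x := by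
  rw [eventually_iff, mem_nhdsGT_iff_exists_Ioc_subset] at h
  obtain ⟨u, hu, hsub⟩ := h
  exact ⟨u, hu, fun x hx => hsub hx⟩

section Potter

variable {Λ : Measure ℝ} {α : ℝ} {ℓ : ℝ → ℝ}

lemma potter_small (hα0 : 0 < α)
    (hint : (∫⁻ y, ENNReal.ofReal (min 1 (y ^ 2)) ∂Λ) < ⊤)
    (hsv : SlowlyVaryingAtZero ℓ)
    (htail : ∀ x : ℝ, 0 < x → upperTail Λ x = x ^ (-α) * ℓ x)
    {β : ℝ} (hβ : α < β) :
    ∃ x₀ > 0, (∀ x ∈ Set.Ioc (0:ℝ) x₀, 0 < upperTail Λ x) ∧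
      ∃ C > 0, ∀ x ∈ Set.Ioc (0:ℝ) x₀, ∀ u ∈ Set.Ioc (0:ℝ) 1,
        upperTail Λ (u * x) ≤ C * u ^ (-β) * upperTail Λ x := by
  set G := upperTail Λ with hG
  set ρ : ℝ := 1/2 with hρ
  have hρ0 : (0:ℝ) < ρ := by norm_num
  have hρ1 : ρ < 1 := by norm_num
  set M : ℝ := ρ ^ (-β) with hMdef
  have hM : ρ ^ (-α) < M := Real.rpow_lt_rpow_of_exponent_gt hρ0 hρ1 (by linarith)
  have hM1 : 1 < M := by
    rw [hMdef, Real.one_lt_rpow_iff_of_pos hρ0]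
    right
    constructor
    · exact hρ1
    · linarith
  have hev := (ev_pos hα0 hsv htail).and
    (ratio_bound hα0 hsv htail hρ0 (ε := M - ρ ^ (-α)) (by linarith))
  obtain ⟨x₀, hx₀, hall⟩ := eventually_to_Ioc hev
  have hGpos : ∀ x ∈ Set.Ioc (0:ℝ) x₀, 0 < G x := fun x hx => (hall x hx).1.2
  have honestep : ∀ x ∈ Set.Ioc (0:ℝ) x₀, G (ρ * x) ≤ M * G x := by
    intro x hx
    have h1 := (hall x hx).2
    have h2 := hGpos x hx
    rw [abs_lt] at h1
    have : G (ρ * x) / G x < M := by linarith [h1.2]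
    calc G (ρ * x) = G (ρ * x) / G x * G x := by field_simp
    _ ≤ M * G x := mul_le_mul_of_nonneg_right this.le h2.le
  have hpow : ∀ n : ℕ, M ^ n = (ρ ^ n) ^ (-β) := by
    intro n
    rw [hMdef, ← Real.rpow_natCast (ρ ^ (-β)) n, ← Real.rpow_natCast ρ n,
      ← Real.rpow_mul hρ0.le, ← Real.rpow_mul hρ0.le]
    ring_nf
  have hind : ∀ k : ℕ, ∀ u : ℝ, ρ ^ (k+1) ≤ u → u ≤ 1 →
      ∀ x ∈ Set.Ioc (0:ℝ) x₀, G (u * x) ≤ M ^ (k+1) * G x := by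
    intro k
    induction k with
    | zero =>
      intro u h1 h2 x hx
      rw [pow_one] at h1 ⊢
      calc G (u * x) ≤ G (ρ * x) := by
            refine tail_anti hint (mul_pos hρ0 hx.1) ?_
            exact mul_le_mul_of_nonneg_right h1 hx.1.le
      _ ≤ M * G x := honestep x hx
    | succ k ih =>
      intro u h1 h2 x hx
      have hu0 : 0 < u := lt_of_lt_of_le (pow_pos hρ0 _) h1
      by_cases hu : ρ < u
      · have base : G (u * x) ≤ M * G x := by
          calc G (u * x) ≤ G (ρ * x) := by
                refine tail_anti hint (mul_pos hρ0 hx.1) ?_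
                exact mul_le_mul_of_nonneg_right hu.le hx.1.le
          _ ≤ M * G x := honestep x hx
        refine le_trans base (mul_le_mul_of_nonneg_right ?_ (tail_nonneg _))
        calc M = M ^ 1 := (pow_one M).symm
        _ ≤ M ^ (k+1+1) := pow_le_pow_right₀ hM1.le (by omega)
      · push_neg at hu
        set v := u / ρ with hv
        have hv0 : 0 < v := div_pos hu0 hρ0
        have hv1 : v ≤ 1 := by
          rw [hv, div_le_one hρ0]
          exact hu
        have hvk : ρ ^ (k+1) ≤ v := by
          rw [hv, le_div_iff₀ hρ0, ← pow_succ]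
          exact h1
        have hvx : v * x ∈ Set.Ioc (0:ℝ) x₀ :=
          ⟨mul_pos hv0 hx.1, le_trans (mul_le_of_le_one_left hx.1.le hv1) hx.2⟩
        have heq : u * x = ρ * (v * x) := by
          rw [hv]; field_simp
        calc G (u * x) = G (ρ * (v * x)) := by rw [heq]
        _ ≤ M * G (v * x) := honestep (v * x) hvx
        _ ≤ M * (M ^ (k+1) * G x) :=
            mul_le_mul_of_nonneg_left (ih v hvk hv1 x hx) (by linarith)
        _ = M ^ (k+1+1) * G x := by ring
  refine ⟨x₀, hx₀, hGpos, M, by linarith, ?_⟩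
  intro x hx u hu
  have hex : ∃ k : ℕ, ρ ^ (k+1) ≤ u := by
    obtain ⟨n, hn⟩ := exists_pow_lt_of_lt_one hu.1 hρ1
    exact ⟨n, le_of_lt (lt_of_le_of_lt (pow_le_pow_of_le_one hρ0.le hρ1.le (by omega)) hn)⟩
  set k := Nat.find hex with hk
  have hks := Nat.find_spec hex
  have huk : u ≤ ρ ^ k := by
    rcases Nat.eq_zero_or_pos k with h0 | h0
    · rw [h0, pow_zero]; exact hu.2
    · obtain ⟨m, hm⟩ := Nat.exists_eq_succ_of_ne_zero h0.ne'
      have := Nat.find_min hex (m := m) (by omega)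
      push_neg at this
      rw [hm]
      exact le_of_lt this
  have main := hind k u hks hu.2 x hx
  have hMk : M ^ (k+1) ≤ M * u ^ (-β) := by
    have h1 : (ρ ^ k : ℝ) ^ (-β) ≤ u ^ (-β) :=
      Real.rpow_le_rpow_of_nonpos hu.1 huk (by linarith)
    calc M ^ (k+1) = M * M ^ k := by ring
    _ = M * (ρ ^ k) ^ (-β) := by rw [hpow]
    _ ≤ M * u ^ (-β) := mul_le_mul_of_nonneg_left h1 (by linarith)
  calc G (u * x) ≤ M ^ (k+1) * G x := main
  _ ≤ M * u ^ (-β) * G x := mul_le_mul_of_nonneg_right hMk (tail_nonneg _)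

end Potter

section Potter2

variable {Λ : Measure ℝ} {α : ℝ} {ℓ : ℝ → ℝ}

lemma potter_large (hα0 : 0 < α)
    (hint : (∫⁻ y, ENNReal.ofReal (min 1 (y ^ 2)) ∂Λ) < ⊤)
    (hsv : SlowlyVaryingAtZero ℓ)
    (htail : ∀ x : ℝ, 0 < x → upperTail Λ x = x ^ (-α) * ℓ x)
    {β : ℝ} (hβ0 : 0 < β) (hβ : β < α) :
    ∃ x₀ > 0, (∀ x ∈ Set.Ioc (0:ℝ) x₀, 0 < upperTail Λ x) ∧
      ∃ C > 0, ∀ x ∈ Set.Ioc (0:ℝ) x₀, ∀ u : ℝ, 1 ≤ u → u * x ≤ x₀ →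
        upperTail Λ (u * x) ≤ C * u ^ (-β) * upperTail Λ x := by
  set G := upperTail Λ with hG
  set ρ : ℝ := 2 with hρ
  have hρ0 : (0:ℝ) < ρ := by norm_num
  have hρ1 : (1:ℝ) < ρ := by norm_num
  set M : ℝ := ρ ^ (-β) with hMdef
  have hM : ρ ^ (-α) < M := Real.rpow_lt_rpow_of_exponent_lt hρ1 (by linarith)
  have hM0 : 0 < M := Real.rpow_pos_of_pos hρ0 _
  have hev := (ev_pos hα0 hsv htail).and
    (ratio_bound hα0 hsv htail hρ0 (ε := M - ρ ^ (-α)) (by linarith))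
  obtain ⟨x₀, hx₀, hall⟩ := eventually_to_Ioc hev
  have hGpos : ∀ x ∈ Set.Ioc (0:ℝ) x₀, 0 < G x := fun x hx => (hall x hx).1.2
  have honestep : ∀ x ∈ Set.Ioc (0:ℝ) x₀, G (ρ * x) ≤ M * G x := by
    intro x hx
    have h1 := (hall x hx).2
    have h2 := hGpos x hx
    rw [abs_lt] at h1
    have : G (ρ * x) / G x < M := by linarith [h1.2]
    calc G (ρ * x) = G (ρ * x) / G x * G x := by field_simp
    _ ≤ M * G x := mul_le_mul_of_nonneg_right this.le h2.le
  have hpow : ∀ n : ℕ, M ^ n = (ρ ^ n) ^ (-β) := by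
    intro n
    rw [hMdef, ← Real.rpow_natCast (ρ ^ (-β)) n, ← Real.rpow_natCast ρ n,
      ← Real.rpow_mul hρ0.le, ← Real.rpow_mul hρ0.le]
    ring_nf
  have hind : ∀ k : ℕ, ∀ x : ℝ, 0 < x → ρ ^ k * x ≤ x₀ →
      G (ρ ^ k * x) ≤ M ^ k * G x := by
    intro k
    induction k with
    | zero => intro x hx _; simp
    | succ k ih =>
      intro x hx h
      have hgrow : ρ ^ k * x ≤ ρ ^ (k+1) * x := by
        have : (ρ:ℝ) ^ k ≤ ρ ^ (k+1) := pow_le_pow_right₀ hρ1.le (by omega)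
        exact mul_le_mul_of_nonneg_right this hx.le
      have hk' : ρ ^ k * x ≤ x₀ := le_trans hgrow h
      have hs : ρ ^ k * x ∈ Set.Ioc (0:ℝ) x₀ := ⟨mul_pos (pow_pos hρ0 _) hx, hk'⟩
      have heq : ρ ^ (k+1) * x = ρ * (ρ ^ k * x) := by ring
      calc G (ρ ^ (k+1) * x) = G (ρ * (ρ ^ k * x)) := by rw [heq]
      _ ≤ M * G (ρ ^ k * x) := honestep _ hs
      _ ≤ M * (M ^ k * G x) := mul_le_mul_of_nonneg_left (ih x hx hk') hM0.le
      _ = M ^ (k+1) * G x := by ring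
  refine ⟨x₀, hx₀, hGpos, ρ ^ β, Real.rpow_pos_of_pos hρ0 _, ?_⟩
  intro x hx u hu hux
  have hu0 : (0:ℝ) < u := lt_of_lt_of_le one_pos hu
  have hex : ∃ k : ℕ, u < ρ ^ (k+1) := by
    obtain ⟨n, hn⟩ := pow_unbounded_of_one_lt u hρ1
    exact ⟨n, lt_of_lt_of_le hn (pow_le_pow_right₀ hρ1.le (by omega))⟩
  set k := Nat.find hex with hk
  have hks : u < ρ ^ (k+1) := Nat.find_spec hex
  have huk : ρ ^ k ≤ u := by
    rcases Nat.eq_zero_or_pos k with h0 | h0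
    · rw [h0, pow_zero]; exact hu
    · obtain ⟨m, hm⟩ := Nat.exists_eq_succ_of_ne_zero h0.ne'
      have := Nat.find_min hex (m := m) (by omega)
      push_neg at this
      rw [hm]
      exact this
  have hanti : G (u * x) ≤ G (ρ ^ k * x) := by
    refine tail_anti hint (mul_pos (pow_pos hρ0 _) hx.1) ?_
    exact mul_le_mul_of_nonneg_right huk hx.1.le
  have hkx : ρ ^ k * x ≤ x₀ :=
    le_trans (mul_le_mul_of_nonneg_right huk hx.1.le) hux
  have hMinv : M * ρ ^ β = 1 := by
    rw [hMdef, ← Real.rpow_add hρ0]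
    simp
  have hMk : M ^ k ≤ ρ ^ β * u ^ (-β) := by
    have h1 : (ρ ^ (k+1) : ℝ) ^ (-β) ≤ u ^ (-β) :=
      Real.rpow_le_rpow_of_nonpos hu0 hks.le (by linarith)
    calc M ^ k = M ^ k * (M * ρ ^ β) := by rw [hMinv]; ring
    _ = ρ ^ β * M ^ (k+1) := by ring
    _ = ρ ^ β * (ρ ^ (k+1)) ^ (-β) := by rw [hpow]
    _ ≤ ρ ^ β * u ^ (-β) :=
        mul_le_mul_of_nonneg_left h1 (Real.rpow_pos_of_pos hρ0 _).le
  calc G (u * x) ≤ G (ρ ^ k * x) := hanti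
  _ ≤ M ^ k * G x := hind k x hx.1 hkx
  _ ≤ ρ ^ β * u ^ (-β) * G x := mul_le_mul_of_nonneg_right hMk (tail_nonneg _)

lemma potter_lower (hα0 : 0 < α)
    (hint : (∫⁻ y, ENNReal.ofReal (min 1 (y ^ 2)) ∂Λ) < ⊤)
    (hsv : SlowlyVaryingAtZero ℓ)
    (htail : ∀ x : ℝ, 0 < x → upperTail Λ x = x ^ (-α) * ℓ x)
    {β : ℝ} (hβ0 : 0 < β) (hβ : β < α) :
    ∃ x₀ > 0, (∀ x ∈ Set.Ioc (0:ℝ) x₀, 0 < upperTail Λ x) ∧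
      ∃ c > 0, ∀ x ∈ Set.Ioc (0:ℝ) x₀, ∀ u ∈ Set.Ioc (0:ℝ) 1,
        c * u ^ (-β) * upperTail Λ x ≤ upperTail Λ (u * x) := by
  set G := upperTail Λ with hG
  set ρ : ℝ := 1/2 with hρ
  have hρ0 : (0:ℝ) < ρ := by norm_num
  have hρ1 : ρ < 1 := by norm_num
  set M : ℝ := ρ ^ (-β) with hMdef
  have hM : M < ρ ^ (-α) := Real.rpow_lt_rpow_of_exponent_gt hρ0 hρ1 (by linarith)
  have hM0 : 0 < M := Real.rpow_pos_of_pos hρ0 _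
  have hev := (ev_pos hα0 hsv htail).and
    (ratio_bound hα0 hsv htail hρ0 (ε := ρ ^ (-α) - M) (by linarith))
  obtain ⟨x₀, hx₀, hall⟩ := eventually_to_Ioc hev
  have hGpos : ∀ x ∈ Set.Ioc (0:ℝ) x₀, 0 < G x := fun x hx => (hall x hx).1.2
  have honestep : ∀ x ∈ Set.Ioc (0:ℝ) x₀, M * G x ≤ G (ρ * x) := by
    intro x hx
    have h1 := (hall x hx).2
    have h2 := hGpos x hx
    rw [abs_lt] at h1
    have : M < G (ρ * x) / G x := by linarith [h1.1]
    calc M * G x ≤ G (ρ * x) / G x * G x :=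
          mul_le_mul_of_nonneg_right this.le h2.le
    _ = G (ρ * x) := by field_simp
  have hpow : ∀ n : ℕ, M ^ n = (ρ ^ n) ^ (-β) := by
    intro n
    rw [hMdef, ← Real.rpow_natCast (ρ ^ (-β)) n, ← Real.rpow_natCast ρ n,
      ← Real.rpow_mul hρ0.le, ← Real.rpow_mul hρ0.le]
    ring_nf
  have hind : ∀ k : ℕ, ∀ x ∈ Set.Ioc (0:ℝ) x₀, M ^ k * G x ≤ G (ρ ^ k * x) := by
    intro k
    induction k with
    | zero => intro x hx; simp
    | succ k ih =>
      intro x hx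
      have hs : ρ ^ k * x ∈ Set.Ioc (0:ℝ) x₀ := by
        constructor
        · exact mul_pos (pow_pos hρ0 _) hx.1
        · refine le_trans ?_ hx.2
          exact mul_le_of_le_one_left hx.1.le (pow_le_one₀ hρ0.le hρ1.le)
      have heq : ρ ^ (k+1) * x = ρ * (ρ ^ k * x) := by ring
      calc M ^ (k+1) * G x = M * (M ^ k * G x) := by ring
      _ ≤ M * G (ρ ^ k * x) := mul_le_mul_of_nonneg_left (ih x hx) hM0.le
      _ ≤ G (ρ * (ρ ^ k * x)) := honestep _ hs
      _ = G (ρ ^ (k+1) * x) := by rw [heq]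
  refine ⟨x₀, hx₀, hGpos, ρ ^ β, Real.rpow_pos_of_pos hρ0 _, ?_⟩
  intro x hx u hu
  have hex : ∃ k : ℕ, ρ ^ (k+1) ≤ u := by
    obtain ⟨n, hn⟩ := exists_pow_lt_of_lt_one hu.1 hρ1
    exact ⟨n, le_of_lt (lt_of_le_of_lt (pow_le_pow_of_le_one hρ0.le hρ1.le (by omega)) hn)⟩
  set k := Nat.find hex with hk
  have hks : ρ ^ (k+1) ≤ u := Nat.find_spec hex
  have huk : u ≤ ρ ^ k := by
    rcases Nat.eq_zero_or_pos k with h0 | h0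
    · rw [h0, pow_zero]; exact hu.2
    · obtain ⟨m, hm⟩ := Nat.exists_eq_succ_of_ne_zero h0.ne'
      have := Nat.find_min hex (m := m) (by omega)
      push_neg at this
      rw [hm]
      exact le_of_lt this
  have hMinv : M * ρ ^ β = 1 := by
    rw [hMdef, ← Real.rpow_add hρ0]
    simp
  have hck : ρ ^ β * u ^ (-β) ≤ M ^ k := by
    have h1 : u ^ (-β) ≤ (ρ ^ (k+1) : ℝ) ^ (-β) :=
      Real.rpow_le_rpow_of_nonpos (pow_pos hρ0 _) hks (by linarith)
    calc ρ ^ β * u ^ (-β) ≤ ρ ^ β * (ρ ^ (k+1)) ^ (-β) :=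
          mul_le_mul_of_nonneg_left h1 (Real.rpow_pos_of_pos hρ0 _).le
    _ = ρ ^ β * M ^ (k+1) := by rw [hpow]
    _ = M ^ k * (M * ρ ^ β) := by ring
    _ = M ^ k := by rw [hMinv]; ring
  have hanti : G (ρ ^ k * x) ≤ G (u * x) := by
    refine tail_anti hint (mul_pos hu.1 hx.1) ?_
    exact mul_le_mul_of_nonneg_right huk hx.1.le
  calc ρ ^ β * u ^ (-β) * G x ≤ M ^ k * G x :=
        mul_le_mul_of_nonneg_right hck (tail_nonneg _)
  _ ≤ G (ρ ^ k * x) := hind k x hx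
  _ ≤ G (u * x) := hanti

end Potter2

section TailLimits

variable {Λ : Measure ℝ} {α : ℝ} {ℓ : ℝ → ℝ}

lemma rpow_neg_tendsto_atTop {β : ℝ} (hβ0 : 0 < β) :
    Tendsto (fun u : ℝ => u ^ (-β)) (𝓝[>] (0:ℝ)) atTop := by
  have h1 : Tendsto (fun u : ℝ => u ^ β) (𝓝[>] (0:ℝ)) (𝓝[>] (0:ℝ)) := by
    rw [tendsto_nhdsWithin_iff]
    constructor
    · have hc : ContinuousAt (fun u : ℝ => u ^ β) 0 :=
        Real.continuousAt_rpow_const 0 β (Or.inr hβ0.le)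
      have := (hc.continuousWithinAt (s := Set.Ioi 0)).tendsto
      rwa [Real.zero_rpow hβ0.ne'] at this
    · filter_upwards [self_mem_nhdsWithin] with u hu
      exact Real.rpow_pos_of_pos hu _
  have h2 := tendsto_inv_nhdsGT_zero.comp h1
  refine h2.congr' ?_
  filter_upwards [self_mem_nhdsWithin] with u hu
  simp only [Function.comp_apply]
  rw [Real.rpow_neg hu.le]

lemma tail_tendsto_atTop (hα0 : 0 < α)
    (hint : (∫⁻ y, ENNReal.ofReal (min 1 (y ^ 2)) ∂Λ) < ⊤)
    (hsv : SlowlyVaryingAtZero ℓ)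
    (htail : ∀ x : ℝ, 0 < x → upperTail Λ x = x ^ (-α) * ℓ x) :
    Tendsto (upperTail Λ) (𝓝[>] (0:ℝ)) atTop := by
  obtain ⟨x₀, hx₀, hGpos, c, hc, hbd⟩ :=
    potter_lower hα0 hint hsv htail (β := α/2) (by linarith) (by linarith)
  have hGx₀ := hGpos x₀ ⟨hx₀, le_rfl⟩
  have hdiv : Tendsto (fun y : ℝ => y / x₀) (𝓝[>] (0:ℝ)) (𝓝[>] (0:ℝ)) := by
    rw [tendsto_nhdsWithin_iff]
    constructor
    · have h0 : Tendsto (fun y : ℝ => y / x₀) (𝓝 (0:ℝ)) (𝓝 (0 / x₀)) :=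
        (continuous_id.div_const x₀).tendsto 0
      rw [zero_div] at h0
      exact h0.mono_left nhdsWithin_le_nhds
    · filter_upwards [self_mem_nhdsWithin] with u hu
      exact div_pos hu hx₀
  have h2 := (rpow_neg_tendsto_atTop (β := α/2) (by linarith)).comp hdiv
  have h3 : Tendsto (fun y : ℝ => c * (y / x₀) ^ (-(α/2)) * upperTail Λ x₀)
      (𝓝[>] (0:ℝ)) atTop := by
    have := (h2.const_mul_atTop hc).atTop_mul_const hGx₀
    exact this
  refine tendsto_atTop_mono' _ ?_ h3
  filter_upwards [Ioc_mem_nhdsGT hx₀] with y hy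
  have hu : y / x₀ ∈ Set.Ioc (0:ℝ) 1 :=
    ⟨div_pos hy.1 hx₀, (div_le_one hx₀).mpr hy.2⟩
  have := hbd x₀ ⟨hx₀, le_rfl⟩ (y / x₀) hu
  have heq : y / x₀ * x₀ = y := by field_simp
  rwa [heq] at this

lemma exists_tail_lt (Λ : Measure ℝ)
    (hint : (∫⁻ y, ENNReal.ofReal (min 1 (y ^ 2)) ∂Λ) < ⊤)
    {ε : ℝ} (hε : 0 < ε) : ∃ x : ℝ, 0 < x ∧ upperTail Λ x < ε := by
  have hanti : Antitone (fun n : ℕ => Set.Ioi ((n:ℝ) + 1)) := by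
    intro m n hmn
    exact Set.Ioi_subset_Ioi (by exact_mod_cast add_le_add_left (Nat.cast_le.mpr hmn) 1)
  have hiInter : (⋂ n : ℕ, Set.Ioi ((n:ℝ) + 1)) = ∅ := by
    ext x
    simp only [Set.mem_iInter, Set.mem_Ioi, Set.mem_empty_iff_false, iff_false, not_forall,
      not_lt]
    obtain ⟨n, hn⟩ := exists_nat_ge x
    exact ⟨n, by linarith⟩
  have h := tendsto_measure_iInter_atTop (μ := Λ)
    (fun n => measurableSet_Ioi.nullMeasurableSet) hanti
    ⟨0, (tail_lt_top hint (by norm_num : (0:ℝ) < (0:ℕ) + 1)).ne⟩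
  rw [hiInter, measure_empty] at h
  have := h.eventually (gt_mem_nhds (ENNReal.ofReal_pos.mpr hε))
  obtain ⟨n, hn⟩ := this.exists
  refine ⟨(n:ℝ) + 1, by positivity, ?_⟩
  exact ENNReal.toReal_lt_of_lt_ofReal hn

end TailLimits


section NormFn

variable {Λ : Measure ℝ} {α : ℝ} {ℓ : ℝ → ℝ}

variable (hα0 : 0 < α)
  (hint : (∫⁻ y, ENNReal.ofReal (min 1 (y ^ 2)) ∂Λ) < ⊤)
  (hsv : SlowlyVaryingAtZero ℓ)
  (htail : ∀ x : ℝ, 0 < x → upperTail Λ x = x ^ (-α) * ℓ x)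

include hα0 hint hsv htail

lemma S_nonempty {t : ℝ} (ht : 0 < t) :
    {x : ℝ | 0 < x ∧ upperTail Λ x > 1 / t}.Nonempty := by
  have h := (tail_tendsto_atTop hα0 hint hsv htail).eventually_gt_atTop (1 / t)
  obtain ⟨x, hx1, hx2⟩ := (h.and self_mem_nhdsWithin).exists
  exact ⟨x, hx2, hx1⟩

omit hα0 hsv htail in
lemma S_bddAbove {t : ℝ} (ht : 0 < t) :
    BddAbove {x : ℝ | 0 < x ∧ upperTail Λ x > 1 / t} := by
  obtain ⟨x₁, hx₁, hGx₁⟩ := exists_tail_lt Λ hint (by positivity : (0:ℝ) < 1 / t)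
  refine ⟨x₁, fun y hy => ?_⟩
  by_contra h
  push_neg at h
  exact absurd (lt_of_le_of_lt (tail_anti hint hx₁ h.le) hGx₁) (not_lt.mpr hy.2.le)

lemma norm_pos {t : ℝ} (ht : 0 < t) : 0 < normFn Λ t := by
  obtain ⟨x, hx⟩ := S_nonempty hα0 hint hsv htail ht
  exact lt_of_lt_of_le hx.1 (le_csSup (S_bddAbove hint ht) hx)

omit hα0 hsv htail in
lemma norm_upper {t y : ℝ} (ht : 0 < t) (hy : 0 < y) (h : normFn Λ t < y) :
    upperTail Λ y ≤ 1 / t := by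
  by_contra hc
  push_neg at hc
  have : y ≤ normFn Λ t := le_csSup (S_bddAbove hint ht) ⟨hy, hc⟩
  linarith

lemma norm_lower {t y : ℝ} (ht : 0 < t) (hy : 0 < y) (h : y < normFn Λ t) :
    1 / t ≤ upperTail Λ y := by
  obtain ⟨s, hs, hys⟩ := exists_lt_of_lt_csSup (S_nonempty hα0 hint hsv htail ht) h
  exact le_trans hs.2.le (tail_anti hint hy hys.le)

lemma norm_le_of_tail_lt {t δ : ℝ} (ht : 0 < t) (hδ : 0 < δ)
    (h : upperTail Λ δ < 1 / t) : normFn Λ t ≤ δ := by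
  refine csSup_le (S_nonempty hα0 hint hsv htail ht) ?_
  intro x hx
  by_contra hc
  push_neg at hc
  exact absurd (lt_of_le_of_lt (tail_anti hint hδ hc.le) h) (not_lt.mpr hx.2.le)

lemma norm_tendsto_zero :
    Tendsto (normFn Λ) (𝓝[>] (0:ℝ)) (𝓝[>] (0:ℝ)) := by
  rw [tendsto_nhdsWithin_iff]
  constructor
  · rw [Metric.tendsto_nhds]
    intro ε hε
    set δ := ε / 2 with hδdef
    have hδ : 0 < δ := by positivity
    have hbd : (0:ℝ) < 1 / (upperTail Λ δ + 1) := by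
      have := tail_nonneg (Λ := Λ) δ
      positivity
    filter_upwards [Ioc_mem_nhdsGT hbd] with t ht
    have ht0 : 0 < t := ht.1
    have hlt : upperTail Λ δ < 1 / t := by
      have h1 : upperTail Λ δ + 1 ≤ 1 / t := by
        rw [le_div_iff₀ ht0]
        have h2 : t * (upperTail Λ δ + 1) ≤ (1 / (upperTail Λ δ + 1)) * (upperTail Λ δ + 1) := by
          apply mul_le_mul_of_nonneg_right ht.2
          have := tail_nonneg (Λ := Λ) δ
          positivity
        rw [one_div, inv_mul_cancel₀ (by have := tail_nonneg (Λ := Λ) δ; positivity)] at h2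
        linarith
      linarith
    have := norm_le_of_tail_lt hα0 hint hsv htail ht0 hδ hlt
    have hpos := norm_pos hα0 hint hsv htail ht0
    rw [Real.dist_eq, sub_zero, abs_of_pos hpos]
    calc normFn Λ t ≤ δ := this
    _ < ε := by rw [hδdef]; linarith
  · filter_upwards [self_mem_nhdsWithin] with t ht
    exact norm_pos hα0 hint hsv htail ht

omit hα0 hint hsv htail in
lemma mul_left_tendsto {lam : ℝ} (hlam : 0 < lam) :
    Tendsto (fun x : ℝ => lam * x) (𝓝[>] (0:ℝ)) (𝓝[>] (0:ℝ)) := by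
  rw [tendsto_nhdsWithin_iff]
  constructor
  · have h0 : Tendsto (fun x : ℝ => lam * x) (𝓝 (0:ℝ)) (𝓝 (lam * 0)) :=
      (continuous_const.mul continuous_id).tendsto 0
    rw [mul_zero] at h0
    exact h0.mono_left nhdsWithin_le_nhds
  · filter_upwards [self_mem_nhdsWithin] with x hx
    exact mul_pos hlam hx

end NormFn

section TGA

variable {Λ : Measure ℝ} {α : ℝ} {ℓ : ℝ → ℝ}

variable (hα0 : 0 < α)
  (hint : (∫⁻ y, ENNReal.ofReal (min 1 (y ^ 2)) ∂Λ) < ⊤)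
  (hsv : SlowlyVaryingAtZero ℓ)
  (htail : ∀ x : ℝ, 0 < x → upperTail Λ x = x ^ (-α) * ℓ x)

include hα0 hint hsv htail

lemma t_tail_norm_tendsto_one :
    Tendsto (fun t => t * upperTail Λ (normFn Λ t)) (𝓝[>] (0:ℝ)) (𝓝 1) := by
  set G := upperTail Λ with hG
  set a := normFn Λ with ha
  rw [Metric.tendsto_nhds]
  intro ε hε
  -- choose lam > 1 with lam^α and lam^(-α) close to 1
  have hc1 : ContinuousAt (fun s : ℝ => s ^ α) 1 :=
    Real.continuousAt_rpow_const 1 α (Or.inl one_ne_zero)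
  have hc2 : ContinuousAt (fun s : ℝ => s ^ (-α)) 1 :=
    Real.continuousAt_rpow_const 1 (-α) (Or.inl one_ne_zero)
  have hev1 : ∀ᶠ s in 𝓝 (1:ℝ), |s ^ α - 1| < ε/2 := by
    have h := Metric.tendsto_nhds.mp hc1.tendsto
    have h2 := h (ε/2) (by positivity)
    rw [Real.one_rpow] at h2
    simpa [Real.dist_eq] using h2
  have hev2 : ∀ᶠ s in 𝓝 (1:ℝ), |s ^ (-α) - 1| < ε/2 := by
    have h := Metric.tendsto_nhds.mp hc2.tendsto
    have h2 := h (ε/2) (by positivity)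
    rw [Real.one_rpow] at h2
    simpa [Real.dist_eq] using h2
  obtain ⟨lam, ⟨hlam1, hlam2⟩, hlam3⟩ :=
    ((((hev1.and hev2).filter_mono (nhdsWithin_le_nhds (s := Set.Ioi (1:ℝ))))).and
      self_mem_nhdsWithin).exists
  have hlamgt : (1:ℝ) < lam := hlam3
  have hlam0 : (0:ℝ) < lam := lt_trans one_pos hlamgt
  have hA := norm_tendsto_zero hα0 hint hsv htail
  have hGpos_ev : ∀ᶠ x in 𝓝[>] (0:ℝ), 0 < G x :=
    (ev_pos hα0 hsv htail).mono fun x hx => hx.2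
  have hP1 := hA.eventually hGpos_ev
  have hP2 := ((mul_left_tendsto hlam0).comp hA).eventually hGpos_ev
  have hP3 := ((mul_left_tendsto (inv_pos.mpr hlam0)).comp hA).eventually hGpos_ev
  have hr_up : Tendsto (fun t => G (lam * a t) / G (a t)) (𝓝[>] (0:ℝ))
      (𝓝 (lam ^ (-α))) := (ratio_tendsto hα0 hsv htail hlam0).comp hA
  have hne : lam ^ (-α) ≠ 0 := (Real.rpow_pos_of_pos hlam0 _).ne'
  have hrup_inv : Tendsto (fun t => G (a t) / G (lam * a t)) (𝓝[>] (0:ℝ))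
      (𝓝 (lam ^ α)) := by
    have h := hr_up.inv₀ hne
    have heq : (lam ^ (-α))⁻¹ = lam ^ α := by
      rw [Real.rpow_neg hlam0.le, inv_inv]
    rw [heq] at h
    refine h.congr fun t => ?_
    rw [inv_div]
  have hr_dn : Tendsto (fun t => G (lam⁻¹ * a t) / G (a t)) (𝓝[>] (0:ℝ))
      (𝓝 (lam ^ α)) := by
    have h := (ratio_tendsto hα0 hsv htail (inv_pos.mpr hlam0)).comp hA
    have heq : (lam⁻¹ : ℝ) ^ (-α) = lam ^ α := by
      rw [Real.inv_rpow hlam0.le, Real.rpow_neg hlam0.le, inv_inv]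
    rwa [heq] at h
  have hrdn_inv : Tendsto (fun t => G (a t) / G (lam⁻¹ * a t)) (𝓝[>] (0:ℝ))
      (𝓝 (lam ^ (-α))) := by
    have h := hr_dn.inv₀ (Real.rpow_pos_of_pos hlam0 α).ne'
    have heq : (lam ^ α)⁻¹ = lam ^ (-α) := by
      rw [Real.rpow_neg hlam0.le]
    rw [heq] at h
    refine h.congr fun t => ?_
    rw [inv_div]
  have hB1 : ∀ᶠ t in 𝓝[>] (0:ℝ), G (a t) / G (lam * a t) < lam ^ α + ε/2 :=
    hrup_inv.eventually (gt_mem_nhds (lt_add_of_pos_right _ (by positivity)))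
  have hB2 : ∀ᶠ t in 𝓝[>] (0:ℝ), lam ^ (-α) - ε/2 < G (a t) / G (lam⁻¹ * a t) :=
    hrdn_inv.eventually (lt_mem_nhds (by linarith [sub_lt_self (lam ^ (-α)) (by positivity : (0:ℝ) < ε/2)]))
  filter_upwards [hP1, hP2, hP3, hB1, hB2, self_mem_nhdsWithin] with t h1 h2 h3 h4 h5 ht
  have ht0 : (0:ℝ) < t := ht
  have hat : 0 < a t := norm_pos hα0 hint hsv htail ht0
  simp only [Function.comp_apply] at h2 h3
  -- upper bound
  have hup : t * G (a t) < 1 + ε := by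
    have hlt : a t < lam * a t := lt_mul_of_one_lt_left hat hlamgt
    have hGle : G (lam * a t) ≤ 1 / t := norm_upper hint ht0 (mul_pos hlam0 hat) hlt
    have htG : t * G (lam * a t) ≤ 1 := by
      calc t * G (lam * a t) ≤ t * (1 / t) := mul_le_mul_of_nonneg_left hGle ht0.le
      _ = 1 := by field_simp
    have hsplit : t * G (a t) = t * G (lam * a t) * (G (a t) / G (lam * a t)) := by
      rw [mul_assoc, mul_comm (G (lam * a t)), div_mul_cancel₀ _ h2.ne']
    rw [hsplit]
    have hfle : t * G (lam * a t) * (G (a t) / G (lam * a t)) ≤ G (a t) / G (lam * a t) := by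
      refine mul_le_of_le_one_left ?_ htG
      positivity
    have habs := abs_lt.mp hlam1
    calc t * G (lam * a t) * (G (a t) / G (lam * a t)) ≤ G (a t) / G (lam * a t) := hfle
    _ < lam ^ α + ε/2 := h4
    _ < 1 + ε := by linarith [habs.2]
  -- lower bound
  have hdn : 1 - ε < t * G (a t) := by
    have hlt : lam⁻¹ * a t < a t := by
      have : lam⁻¹ < 1 := inv_lt_one_of_one_lt₀ hlamgt
      exact mul_lt_of_lt_one_left hat this
    have hGge : 1 / t ≤ G (lam⁻¹ * a t) :=
      norm_lower hα0 hint hsv htail ht0 (mul_pos (inv_pos.mpr hlam0) hat) hlt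
    have htG : 1 ≤ t * G (lam⁻¹ * a t) := by
      calc (1:ℝ) = t * (1 / t) := by field_simp
      _ ≤ t * G (lam⁻¹ * a t) := mul_le_mul_of_nonneg_left hGge ht0.le
    have hsplit : t * G (a t) = t * G (lam⁻¹ * a t) * (G (a t) / G (lam⁻¹ * a t)) := by
      rw [mul_assoc, mul_comm (G (lam⁻¹ * a t)), div_mul_cancel₀ _ h3.ne']
    rw [hsplit]
    have hfge : G (a t) / G (lam⁻¹ * a t)
        ≤ t * G (lam⁻¹ * a t) * (G (a t) / G (lam⁻¹ * a t)) := by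
      refine le_mul_of_one_le_left ?_ htG
      positivity
    have habs := abs_lt.mp hlam2
    calc (1:ℝ) - ε < lam ^ (-α) - ε/2 := by linarith [habs.1]
    _ < G (a t) / G (lam⁻¹ * a t) := h5
    _ ≤ t * G (lam⁻¹ * a t) * (G (a t) / G (lam⁻¹ * a t)) := hfge
  rw [Real.dist_eq, abs_lt]
  constructor <;> linarith

end TGA

section Integrability

variable {Λ : Measure ℝ} {α : ℝ} {ℓ : ℝ → ℝ}

lemma rpow_int_Ioc {β δ : ℝ} (hβ : β < 1) (_hδ : 0 < δ) :
    IntegrableOn (fun s : ℝ => s ^ (-β)) (Set.Ioc 0 δ) volume :=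
  (intervalIntegral.intervalIntegrable_rpow' (by linarith)).1


lemma G_int_mid (hint : (∫⁻ y, ENNReal.ofReal (min 1 (y ^ 2)) ∂Λ) < ⊤)
    {a b : ℝ} (ha : 0 < a) :
    IntegrableOn (upperTail Λ) (Set.Ioc a b) volume := by
  refine Integrable.mono' (g := fun _ => upperTail Λ a)
    (integrableOn_const (by rw [Real.volume_Ioc]; exact ENNReal.ofReal_ne_top))
    tail_measurable.aestronglyMeasurable ?_
  refine (ae_restrict_iff' measurableSet_Ioc).mpr (Filter.Eventually.of_forall ?_)
  intro s hs
  rw [Real.norm_eq_abs, abs_of_nonneg (tail_nonneg _)]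
  exact tail_anti hint ha hs.1.le

variable (hα0 : 0 < α)
  (hint : (∫⁻ y, ENNReal.ofReal (min 1 (y ^ 2)) ∂Λ) < ⊤)
  (hsv : SlowlyVaryingAtZero ℓ)
  (htail : ∀ x : ℝ, 0 < x → upperTail Λ x = x ^ (-α) * ℓ x)

include hα0 hint hsv htail

lemma G_locint (hα1 : α < 1) {b : ℝ} (hb : 0 < b) :
    IntegrableOn (upperTail Λ) (Set.Ioc 0 b) volume := by
  obtain ⟨x₀, hx₀, hGpos, C, hC, hbd⟩ :=
    potter_small hα0 hint hsv htail (β := (1+α)/2) (by linarith)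
  set β : ℝ := (1+α)/2 with hβdef
  have hβ1 : β < 1 := by rw [hβdef]; linarith
  set m : ℝ := min x₀ b with hm
  have hm0 : 0 < m := lt_min hx₀ hb
  have hmb : m ≤ b := min_le_right _ _
  have h1 : IntegrableOn (upperTail Λ) (Set.Ioc 0 m) volume := by
    refine Integrable.mono'
      (g := fun s => C * upperTail Λ x₀ / x₀ ^ (-β) * s ^ (-β)) ?_
      tail_measurable.aestronglyMeasurable ?_
    · exact ((rpow_int_Ioc hβ1 hm0).const_mul _)
    · refine (ae_restrict_iff' measurableSet_Ioc).mpr (Filter.Eventually.of_forall ?_)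
      intro s hs
      rw [Real.norm_eq_abs, abs_of_nonneg (tail_nonneg _)]
      have hu : s / x₀ ∈ Set.Ioc (0:ℝ) 1 :=
        ⟨div_pos hs.1 hx₀, (div_le_one hx₀).mpr (le_trans hs.2 (min_le_left _ _))⟩
      have := hbd x₀ ⟨hx₀, le_rfl⟩ (s / x₀) hu
      rw [div_mul_cancel₀ _ hx₀.ne'] at this
      refine le_trans this (le_of_eq ?_)
      rw [Real.div_rpow hs.1.le hx₀.le]
      ring
  have h2 : IntegrableOn (upperTail Λ) (Set.Ioc m b) volume := G_int_mid hint hm0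
  have := h1.union h2
  rwa [Set.Ioc_union_Ioc_eq_Ioc hm0.le hmb] at this

lemma xGx_atTop (hα1 : 1 < α) :
    Tendsto (fun x => x * upperTail Λ x) (𝓝[>] (0:ℝ)) atTop := by
  obtain ⟨x₀, hx₀, hGpos, c, hc, hbd⟩ :=
    potter_lower hα0 hint hsv htail (β := (1+α)/2) (by linarith) (by linarith)
  set β : ℝ := (1+α)/2 with hβdef
  have hβ1 : 1 < β := by rw [hβdef]; linarith
  have hGx₀ := hGpos x₀ ⟨hx₀, le_rfl⟩
  have hdiv : Tendsto (fun y : ℝ => y / x₀) (𝓝[>] (0:ℝ)) (𝓝[>] (0:ℝ)) := by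
    rw [tendsto_nhdsWithin_iff]
    constructor
    · have h0 : Tendsto (fun y : ℝ => y / x₀) (𝓝 (0:ℝ)) (𝓝 (0 / x₀)) :=
        (continuous_id.div_const x₀).tendsto 0
      rw [zero_div] at h0
      exact h0.mono_left nhdsWithin_le_nhds
    · filter_upwards [self_mem_nhdsWithin] with u hu
      exact div_pos hu hx₀
  have h2 := (rpow_neg_tendsto_atTop (β := β - 1) (by linarith)).comp hdiv
  have h3 : Tendsto (fun y : ℝ => c * x₀ * upperTail Λ x₀ * ((y / x₀) ^ (-(β - 1))))
      (𝓝[>] (0:ℝ)) atTop := h2.const_mul_atTop (by positivity)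
  refine tendsto_atTop_mono' _ ?_ h3
  filter_upwards [Ioc_mem_nhdsGT hx₀] with y hy
  have hu : y / x₀ ∈ Set.Ioc (0:ℝ) 1 :=
    ⟨div_pos hy.1 hx₀, (div_le_one hx₀).mpr hy.2⟩
  have hb := hbd x₀ ⟨hx₀, le_rfl⟩ (y / x₀) hu
  rw [div_mul_cancel₀ _ hx₀.ne'] at hb
  have key : c * x₀ * upperTail Λ x₀ * (y / x₀) ^ (-(β - 1))
      = y * (c * (y / x₀) ^ (-β) * upperTail Λ x₀) := by
    have hsplit : (y / x₀ : ℝ) ^ (-(β - 1)) = (y / x₀) ^ (-β) * (y / x₀) := by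
      have : (-(β - 1) : ℝ) = -β + 1 := by ring
      rw [this, Real.rpow_add (div_pos hy.1 hx₀), Real.rpow_one]
    rw [hsplit]
    field_simp
  rw [key]
  exact mul_le_mul_of_nonneg_left hb hy.1.le

end Integrability

section Gamma

variable {Λ : Measure ℝ} {α : ℝ} {ℓ : ℝ → ℝ}

variable (hα0 : 0 < α)
  (hint : (∫⁻ y, ENNReal.ofReal (min 1 (y ^ 2)) ∂Λ) < ⊤)
  (hsv : SlowlyVaryingAtZero ℓ)
  (htail : ∀ x : ℝ, 0 < x → upperTail Λ x = x ^ (-α) * ℓ x)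

include hα0 hint hsv htail

lemma gamma_fin (hα1 : α < 1) :
    (∫⁻ y in Set.Ioc (0:ℝ) 1, ENNReal.ofReal y ∂Λ) < ⊤ := by
  obtain ⟨x₀, hx₀, hGpos, C, hC, hbd⟩ :=
    potter_small hα0 hint hsv htail (β := (1+α)/2) (by linarith)
  set β : ℝ := (1+α)/2 with hβdef
  have hβ1 : β < 1 := by rw [hβdef]; linarith
  have hβ0 : 0 < β := by rw [hβdef]; linarith
  set δ : ℝ := min x₀ 1 with hδdef
  have hδ0 : 0 < δ := lt_min hx₀ one_pos
  have hδ1 : δ ≤ 1 := min_le_right _ _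
  have hδx₀ : δ ≤ x₀ := min_le_left _ _
  have hsplit : (∫⁻ y in Set.Ioc (0:ℝ) 1, ENNReal.ofReal y ∂Λ)
      = (∫⁻ y in Set.Ioc (0:ℝ) δ, ENNReal.ofReal y ∂Λ)
        + (∫⁻ y in Set.Ioc δ 1, ENNReal.ofReal y ∂Λ) := by
    rw [← Set.Ioc_union_Ioc_eq_Ioc hδ0.le hδ1, lintegral_union measurableSet_Ioc
      (Set.Ioc_disjoint_Ioc_of_le le_rfl)]
  rw [hsplit]
  have hsecond : (∫⁻ y in Set.Ioc δ 1, ENNReal.ofReal y ∂Λ) < ⊤ := by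
    have hle : (∫⁻ y in Set.Ioc δ 1, ENNReal.ofReal y ∂Λ)
        ≤ ∫⁻ _ in Set.Ioc δ 1, 1 ∂Λ := by
      refine setLIntegral_mono' measurableSet_Ioc ?_
      intro y hy
      exact ENNReal.ofReal_le_one.mpr hy.2
    rw [setLIntegral_one] at hle
    exact lt_of_le_of_lt hle
      (lt_of_le_of_lt (measure_mono Set.Ioc_subset_Ioi_self) (tail_lt_top hint hδ0))
  have hfirst : (∫⁻ y in Set.Ioc (0:ℝ) δ, ENNReal.ofReal y ∂Λ) < ⊤ := by
    have hnn : 0 ≤ᵐ[Λ.restrict (Set.Ioc (0:ℝ) δ)] (fun y => y) :=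
      (ae_restrict_iff' measurableSet_Ioc).mpr (Filter.Eventually.of_forall fun y hy => hy.1.le)
    have key := lintegral_eq_lintegral_meas_lt (Λ.restrict (Set.Ioc (0:ℝ) δ)) hnn
      aemeasurable_id
    have heq : (∫⁻ y in Set.Ioc (0:ℝ) δ, ENNReal.ofReal y ∂Λ)
        = ∫⁻ t in Set.Ioi (0:ℝ), (Λ.restrict (Set.Ioc (0:ℝ) δ)) {a : ℝ | t < a} := key
    rw [heq]
    set g : ℝ → ℝ := fun t => C * upperTail Λ x₀ / x₀ ^ (-β) * t ^ (-β) with hgdef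
    have hgint : IntegrableOn g (Set.Ioc (0:ℝ) δ) volume :=
      (rpow_int_Ioc hβ1 hδ0).const_mul _
    have hgnn : ∀ t ∈ Set.Ioc (0:ℝ) δ, 0 ≤ g t := by
      intro t ht
      have h1 : (0:ℝ) ≤ x₀ ^ (-β) := (Real.rpow_pos_of_pos hx₀ _).le
      have h2 : (0:ℝ) ≤ t ^ (-β) := (Real.rpow_pos_of_pos ht.1 _).le
      have h3 := (hGpos x₀ ⟨hx₀, le_rfl⟩).le
      positivity
    have hmono : (∫⁻ t in Set.Ioi (0:ℝ), (Λ.restrict (Set.Ioc (0:ℝ) δ)) {a : ℝ | t < a})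
        ≤ ∫⁻ t in Set.Ioi (0:ℝ),
            (Set.Ioc (0:ℝ) δ).indicator (fun t => ENNReal.ofReal (g t)) t := by
      refine setLIntegral_mono' measurableSet_Ioi ?_
      intro t ht
      have hset : {a : ℝ | t < a} = Set.Ioi t := rfl
      rw [hset, Measure.restrict_apply measurableSet_Ioi]
      by_cases htδ : t ≤ δ
      · have htm : t ∈ Set.Ioc (0:ℝ) δ := ⟨ht, htδ⟩
        rw [Set.indicator_of_mem htm]
        have hsub : Set.Ioi t ∩ Set.Ioc (0:ℝ) δ ⊆ Set.Ioi t := Set.inter_subset_left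
        refine le_trans (measure_mono hsub) ?_
        rw [← tail_ofReal hint ht]
        refine ENNReal.ofReal_le_ofReal ?_
        have hu : t / x₀ ∈ Set.Ioc (0:ℝ) 1 :=
          ⟨div_pos ht hx₀, (div_le_one hx₀).mpr (le_trans htδ hδx₀)⟩
        have hb := hbd x₀ ⟨hx₀, le_rfl⟩ (t / x₀) hu
        rw [div_mul_cancel₀ _ hx₀.ne'] at hb
        refine le_trans hb (le_of_eq ?_)
        rw [hgdef]
        simp only []
        rw [Real.div_rpow ht.le hx₀.le]
        ring
      · push_neg at htδ
        have : Set.Ioi t ∩ Set.Ioc (0:ℝ) δ = ∅ := by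
          ext y
          simp only [Set.mem_inter_iff, Set.mem_Ioi, Set.mem_Ioc, Set.mem_empty_iff_false,
            iff_false, not_and]
          intro h1 h2
          intro h3
          linarith
        rw [this, measure_empty]
        exact zero_le
    refine lt_of_le_of_lt hmono ?_
    have hind : (∫⁻ t in Set.Ioi (0:ℝ),
        (Set.Ioc (0:ℝ) δ).indicator (fun t => ENNReal.ofReal (g t)) t)
        ≤ ∫⁻ t, (Set.Ioc (0:ℝ) δ).indicator (fun t => ENNReal.ofReal (g t)) t :=
      setLIntegral_le_lintegral _ _
    refine lt_of_le_of_lt hind ?_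
    rw [lintegral_indicator measurableSet_Ioc]
    have hgi : Integrable g (volume.restrict (Set.Ioc (0:ℝ) δ)) := hgint
    have := hgi.2
    rw [hasFiniteIntegral_iff_ofReal] at this
    · exact this
    · exact (ae_restrict_iff' measurableSet_Ioc).mpr (Filter.Eventually.of_forall hgnn)
  exact ENNReal.add_lt_top.mpr ⟨hfirst, hsecond⟩

lemma gamma_inf (hα1 : 1 < α) :
    ¬ ((∫⁻ y in Set.Ioc (0:ℝ) 1, ENNReal.ofReal y ∂Λ) < ⊤) := by
  intro hfin
  set I := ∫⁻ y in Set.Ioc (0:ℝ) 1, ENNReal.ofReal y ∂Λ with hI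
  have hbig := (xGx_atTop hα0 hint hsv htail hα1).eventually_ge_atTop
    (I.toReal + 1 + upperTail Λ 1)
  obtain ⟨r, hr1, hr2⟩ := (hbig.and (Ioc_mem_nhdsGT one_pos)).exists
  have hr0 : 0 < r := hr2.1
  have hrle : r ≤ 1 := hr2.2
  have hlower : ENNReal.ofReal (r * (upperTail Λ r - upperTail Λ 1)) ≤ I := by
    have h1 : ENNReal.ofReal r * Λ (Set.Ioc r 1) ≤ I := by
      have h2 : (∫⁻ y in Set.Ioc r 1, ENNReal.ofReal r ∂Λ)
          ≤ ∫⁻ y in Set.Ioc r 1, ENNReal.ofReal y ∂Λ := by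
        refine setLIntegral_mono' measurableSet_Ioc ?_
        intro y hy
        exact ENNReal.ofReal_le_ofReal hy.1.le
      rw [setLIntegral_const] at h2
      refine le_trans h2 ?_
      refine lintegral_mono_set ?_
      intro y hy
      exact ⟨lt_trans hr0 hy.1, hy.2⟩
    have h3 : Λ (Set.Ioc r 1) = ENNReal.ofReal (upperTail Λ r - upperTail Λ 1) := by
      have hfin2 : Λ (Set.Ioc r 1) < ⊤ :=
        lt_of_le_of_lt (measure_mono Set.Ioc_subset_Ioi_self) (tail_lt_top hint hr0)
      rw [← tail_diff hint hr0 hrle, ENNReal.ofReal_toReal hfin2.ne]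
    rw [ENNReal.ofReal_mul hr0.le, ← h3]
    exact h1
  have harith : I.toReal + 1 ≤ r * (upperTail Λ r - upperTail Λ 1) := by
    have h4 : r * upperTail Λ 1 ≤ upperTail Λ 1 :=
      mul_le_of_le_one_left (tail_nonneg _) hrle
    nlinarith [hr1]
  have := le_trans (ENNReal.ofReal_le_ofReal harith) hlower
  rw [ENNReal.ofReal_le_iff_le_toReal hfin.ne] at this
  have h5 : (0:ℝ) ≤ I.toReal := ENNReal.toReal_nonneg
  have h6 : ENNReal.ofReal (I.toReal + 1) ≤ ENNReal.ofReal (r * (upperTail Λ r - upperTail Λ 1)) := ENNReal.ofReal_le_ofReal harith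
  have h7 := le_trans h6 hlower
  rw [ENNReal.ofReal_le_iff_le_toReal hfin.ne] at h7
  linarith

end Gamma

section Bochner

variable {Λ : Measure ℝ} {α : ℝ} {ℓ : ℝ → ℝ}

variable (hα0 : 0 < α)
  (hint : (∫⁻ y, ENNReal.ofReal (min 1 (y ^ 2)) ∂Λ) < ⊤)
  (hsv : SlowlyVaryingAtZero ℓ)
  (htail : ∀ x : ℝ, 0 < x → upperTail Λ x = x ^ (-α) * ℓ x)

include hα0 hint hsv htail

lemma int_id_Ioc (hα1 : α < 1) {b : ℝ} (hb : 0 < b) (hb1 : b ≤ 1) :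
    IntegrableOn (fun y : ℝ => y) (Set.Ioc 0 b) Λ := by
  have h1 : IntegrableOn (fun y : ℝ => y) (Set.Ioc 0 1) Λ := by
    constructor
    · exact aestronglyMeasurable_id
    · refine (hasFiniteIntegral_iff_ofReal ((ae_restrict_iff' measurableSet_Ioc).mpr
        (Filter.Eventually.of_forall fun y hy => hy.1.le))).mpr ?_
      exact gamma_fin hα0 hint hsv htail hα1
  exact h1.mono_set (Set.Ioc_subset_Ioc_right hb1)

lemma bochner_small (hα1 : α < 1) {b : ℝ} (hb : 0 < b) (hb1 : b ≤ 1) :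
    ∫ y in Set.Ioc (0:ℝ) b, y ∂Λ
      = (∫ s in Set.Ioc (0:ℝ) b, upperTail Λ s) - b * upperTail Λ b := by
  set G := upperTail Λ with hGdef
  have hInt : Integrable (fun y : ℝ => y) (Λ.restrict (Set.Ioc (0:ℝ) b)) :=
    int_id_Ioc hα0 hint hsv htail hα1 hb hb1
  have hnn : 0 ≤ᵐ[Λ.restrict (Set.Ioc (0:ℝ) b)] (fun y : ℝ => y) :=
    (ae_restrict_iff' measurableSet_Ioc).mpr (Filter.Eventually.of_forall fun y hy => hy.1.le)
  have key := hInt.integral_eq_integral_meas_lt hnn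
  simp only [measureReal_def] at key
  have hcong : ∀ t ∈ Set.Ioi (0:ℝ),
      ((Λ.restrict (Set.Ioc (0:ℝ) b)) {a : ℝ | t < a}).toReal
        = (Set.Ioc (0:ℝ) b).indicator (fun s => G s - G b) t := by
    intro t ht
    have hset : {a : ℝ | t < a} = Set.Ioi t := rfl
    rw [hset, Measure.restrict_apply measurableSet_Ioi]
    by_cases htb : t ≤ b
    · have hmem : t ∈ Set.Ioc (0:ℝ) b := ⟨ht, htb⟩
      rw [Set.indicator_of_mem hmem]
      have hseteq : Set.Ioi t ∩ Set.Ioc (0:ℝ) b = Set.Ioc t b := by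
        ext y
        simp only [Set.mem_inter_iff, Set.mem_Ioi, Set.mem_Ioc]
        constructor
        · rintro ⟨h1, _, h3⟩; exact ⟨h1, h3⟩
        · rintro ⟨h1, h2⟩; exact ⟨h1, lt_trans ht h1, h2⟩
      rw [hseteq]
      exact tail_diff hint ht htb
    · push_neg at htb
      rw [Set.indicator_of_notMem (by simp [Set.mem_Ioc, not_and, htb.not_ge] : t ∉ Set.Ioc (0:ℝ) b)]
      have : Set.Ioi t ∩ Set.Ioc (0:ℝ) b = ∅ := by
        ext y
        simp only [Set.mem_inter_iff, Set.mem_Ioi, Set.mem_Ioc, Set.mem_empty_iff_false,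
          iff_false, not_and]
        intro h1 h2
        intro h3
        linarith
      rw [this, measure_empty]
      simp
  rw [key, setIntegral_congr_fun measurableSet_Ioi hcong,
    setIntegral_indicator measurableSet_Ioc,
    Set.inter_eq_self_of_subset_right (fun y hy => hy.1)]
  have hGint : IntegrableOn G (Set.Ioc (0:ℝ) b) volume :=
    G_locint hα0 hint hsv htail hα1 hb
  have hCint : IntegrableOn (fun _ : ℝ => G b) (Set.Ioc (0:ℝ) b) volume :=
    integrableOn_const (by rw [Real.volume_Ioc]; exact ENNReal.ofReal_ne_top)
  rw [integral_sub hGint hCint, setIntegral_const]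
  rw [Real.volume_real_Ioc_of_le hb.le, sub_zero, smul_eq_mul]

omit hα0 hsv htail in
lemma bochner_large {x : ℝ} (hx : 0 < x) (hx1 : x ≤ 1) :
    ∫ y in Set.Ioc x 1, y ∂Λ
      = x * upperTail Λ x + (∫ s in Set.Ioc x 1, upperTail Λ s) - upperTail Λ 1 := by
  set G := upperTail Λ with hGdef
  have hfinm : Λ (Set.Ioc x 1) < ⊤ :=
    lt_of_le_of_lt (measure_mono Set.Ioc_subset_Ioi_self) (tail_lt_top hint hx)
  have hInt : Integrable (fun y : ℝ => y) (Λ.restrict (Set.Ioc x 1)) := by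
    refine Integrable.mono' (g := fun _ => (1:ℝ))
      (integrableOn_const hfinm.ne) aestronglyMeasurable_id ?_
    refine (ae_restrict_iff' measurableSet_Ioc).mpr (Filter.Eventually.of_forall ?_)
    intro y hy
    rw [Real.norm_eq_abs, abs_of_pos (lt_trans hx hy.1)]
    exact hy.2
  have hnn : 0 ≤ᵐ[Λ.restrict (Set.Ioc x 1)] (fun y : ℝ => y) :=
    (ae_restrict_iff' measurableSet_Ioc).mpr
      (Filter.Eventually.of_forall fun y hy => (lt_trans hx hy.1).le)
  have key := hInt.integral_eq_integral_meas_lt hnn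
  simp only [measureReal_def] at key
  set h : ℝ → ℝ := fun t => if t ≤ x then (Λ (Set.Ioc x 1)).toReal else G t - G 1 with hhdef
  have hcong : ∀ t ∈ Set.Ioi (0:ℝ),
      ((Λ.restrict (Set.Ioc x 1)) {a : ℝ | t < a}).toReal
        = (Set.Ioc (0:ℝ) 1).indicator h t := by
    intro t ht
    have hset : {a : ℝ | t < a} = Set.Ioi t := rfl
    rw [hset, Measure.restrict_apply measurableSet_Ioi]
    by_cases ht1 : t ≤ 1
    · have hmem : t ∈ Set.Ioc (0:ℝ) 1 := ⟨ht, ht1⟩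
      rw [Set.indicator_of_mem hmem]
      by_cases htx : t ≤ x
      · rw [hhdef]
        simp only [if_pos htx]
        have hseteq : Set.Ioi t ∩ Set.Ioc x 1 = Set.Ioc x 1 := by
          ext y
          simp only [Set.mem_inter_iff, Set.mem_Ioi, Set.mem_Ioc]
          constructor
          · rintro ⟨_, h2, h3⟩; exact ⟨h2, h3⟩
          · rintro ⟨h2, h3⟩; exact ⟨lt_of_le_of_lt htx h2, h2, h3⟩
        rw [hseteq]
      · push_neg at htx
        rw [hhdef]
        simp only [if_neg htx.not_ge]
        have hseteq : Set.Ioi t ∩ Set.Ioc x 1 = Set.Ioc t 1 := by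
          ext y
          simp only [Set.mem_inter_iff, Set.mem_Ioi, Set.mem_Ioc]
          constructor
          · rintro ⟨h1, _, h3⟩; exact ⟨h1, h3⟩
          · rintro ⟨h1, h2⟩; exact ⟨h1, lt_trans htx h1, h2⟩
        rw [hseteq]
        exact tail_diff hint ht ht1
    · push_neg at ht1
      rw [Set.indicator_of_notMem (by simp [Set.mem_Ioc, ht1.not_ge] : t ∉ Set.Ioc (0:ℝ) 1)]
      have : Set.Ioi t ∩ Set.Ioc x 1 = ∅ := by
        ext y
        simp only [Set.mem_inter_iff, Set.mem_Ioi, Set.mem_Ioc, Set.mem_empty_iff_false,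
          iff_false, not_and]
        intro h1 h2
        intro h3
        linarith
      rw [this, measure_empty]
      simp
  rw [key, setIntegral_congr_fun measurableSet_Ioi hcong,
    setIntegral_indicator measurableSet_Ioc,
    Set.inter_eq_self_of_subset_right (fun y hy => hy.1)]
  have hsplit : Set.Ioc (0:ℝ) 1 = Set.Ioc (0:ℝ) x ∪ Set.Ioc x 1 :=
    (Set.Ioc_union_Ioc_eq_Ioc hx.le hx1).symm
  have hi1 : IntegrableOn h (Set.Ioc (0:ℝ) x) volume := by
    refine (integrableOn_const (by rw [Real.volume_Ioc]; exact ENNReal.ofReal_ne_top)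
       : IntegrableOn (fun _ : ℝ => (Λ (Set.Ioc x 1)).toReal) _ _).congr_fun ?_ measurableSet_Ioc
    intro t htm
    rw [hhdef]
    simp only [if_pos htm.2]
  have hi2 : IntegrableOn h (Set.Ioc x 1) volume := by
    have hconst : IntegrableOn (fun _ : ℝ => G 1) (Set.Ioc x 1) volume :=
      integrableOn_const (by rw [Real.volume_Ioc]; exact ENNReal.ofReal_ne_top)
    have base : IntegrableOn (fun t : ℝ => G t - G 1) (Set.Ioc x 1) volume :=
      (G_int_mid hint hx).sub hconst
    refine base.congr_fun ?_ measurableSet_Ioc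
    intro t htm
    rw [hhdef]
    simp only [if_neg htm.1.not_ge]
  rw [hsplit, setIntegral_union (Set.Ioc_disjoint_Ioc_of_le le_rfl) measurableSet_Ioc hi1 hi2]
  have hp1 : ∫ t in Set.Ioc (0:ℝ) x, h t = x * (G x - G 1) := by
    rw [setIntegral_congr_fun measurableSet_Ioc
      (fun t htm => by rw [hhdef]; simp only [if_pos htm.2] :
        Set.EqOn h (fun _ => (Λ (Set.Ioc x 1)).toReal) (Set.Ioc (0:ℝ) x)),
      setIntegral_const, Real.volume_real_Ioc_of_le hx.le, sub_zero, smul_eq_mul,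
      tail_diff hint hx hx1]
  have hp2 : ∫ t in Set.Ioc x 1, h t = (∫ s in Set.Ioc x 1, G s) - (1 - x) * G 1 := by
    rw [setIntegral_congr_fun measurableSet_Ioc
      (fun t htm => by rw [hhdef]; simp only [if_neg htm.1.not_ge] :
        Set.EqOn h (fun t => G t - G 1) (Set.Ioc x 1))]
    rw [integral_sub (G_int_mid hint hx) (integrableOn_const
      (by rw [Real.volume_Ioc]; exact ENNReal.ofReal_ne_top))]
    rw [setIntegral_const, Real.volume_real_Ioc_of_le hx1, smul_eq_mul]
  rw [hp1, hp2]
  ring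

end Bochner

section Karamata

variable {Λ : Measure ℝ} {α : ℝ} {ℓ : ℝ → ℝ}

variable (hα0 : 0 < α)
  (hint : (∫⁻ y, ENNReal.ofReal (min 1 (y ^ 2)) ∂Λ) < ⊤)
  (hsv : SlowlyVaryingAtZero ℓ)
  (htail : ∀ x : ℝ, 0 < x → upperTail Λ x = x ^ (-α) * ℓ x)

include hα0 hint hsv htail

lemma kar_small (hα1 : α < 1) :
    Tendsto (fun x => ∫ u in Set.Ioc (0:ℝ) 1, upperTail Λ (u * x) / upperTail Λ x)
      (𝓝[>] (0:ℝ)) (𝓝 (1 / (1 - α))) := by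
  set G := upperTail Λ with hGdef
  obtain ⟨x₀, hx₀, hGpos, C, hC, hbd⟩ :=
    potter_small hα0 hint hsv htail (β := (1+α)/2) (by linarith)
  set β : ℝ := (1+α)/2 with hβdef
  have hβ1 : β < 1 := by rw [hβdef]; linarith
  have hlim := tendsto_integral_filter_of_dominated_convergence
    (μ := volume.restrict (Set.Ioc (0:ℝ) 1)) (l := 𝓝[>] (0:ℝ))
    (F := fun x u => G (u * x) / G x) (f := fun u => u ^ (-α))
    (bound := fun u => C * u ^ (-β))
    (hF_meas := by
      refine Filter.Eventually.of_forall fun x => ?_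
      exact ((tail_measurable.comp (measurable_id.mul_const x)).div_const _).aestronglyMeasurable)
    (h_bound := by
      filter_upwards [Ioc_mem_nhdsGT hx₀] with x hx
      refine (ae_restrict_iff' measurableSet_Ioc).mpr (Filter.Eventually.of_forall ?_)
      intro u hu
      have hGx := hGpos x hx
      rw [Real.norm_eq_abs, abs_of_nonneg (div_nonneg (tail_nonneg _) (tail_nonneg _))]
      rw [div_le_iff₀ hGx]
      exact hbd x hx u hu)
    (bound_integrable := (rpow_int_Ioc hβ1 one_pos).const_mul C)
    (h_lim := by
      refine (ae_restrict_iff' measurableSet_Ioc).mpr (Filter.Eventually.of_forall ?_)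
      intro u hu
      exact ratio_tendsto hα0 hsv htail hu.1)
  have hval : (∫ u in Set.Ioc (0:ℝ) 1, u ^ (-α)) = 1 / (1 - α) := by
    rw [← intervalIntegral.integral_of_le zero_le_one, integral_rpow (Or.inl (by linarith))]
    rw [Real.one_rpow, Real.zero_rpow (by intro h; linarith : (-α + 1 : ℝ) ≠ 0)]
    rw [show (-α + 1 : ℝ) = 1 - α by ring]
    rw [sub_zero]
  rwa [hval] at hlim

lemma kar_large (hα1 : 1 < α) :
    ∃ δ : ℝ, 0 < δ ∧ δ ≤ 1 ∧ (∀ x ∈ Set.Ioc (0:ℝ) δ, 0 < upperTail Λ x) ∧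
      Tendsto (fun x => ∫ u in Set.Ioc (1:ℝ) (δ / x), upperTail Λ (u * x) / upperTail Λ x)
        (𝓝[>] (0:ℝ)) (𝓝 (1 / (α - 1))) := by
  set G := upperTail Λ with hGdef
  obtain ⟨x₀, hx₀, hGpos, C, hC, hbd⟩ :=
    potter_large hα0 hint hsv htail (β := (1+α)/2) (by linarith) (by linarith)
  set β : ℝ := (1+α)/2 with hβdef
  have hβ1 : 1 < β := by rw [hβdef]; linarith
  set δ : ℝ := min x₀ 1 with hδdef
  have hδ0 : 0 < δ := lt_min hx₀ one_pos
  have hδ1 : δ ≤ 1 := min_le_right _ _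
  have hδx₀ : δ ≤ x₀ := min_le_left _ _
  refine ⟨δ, hδ0, hδ1, fun x hx => hGpos x ⟨hx.1, le_trans hx.2 hδx₀⟩, ?_⟩
  have hlim := tendsto_integral_filter_of_dominated_convergence
    (μ := volume.restrict (Set.Ioi (1:ℝ))) (l := 𝓝[>] (0:ℝ))
    (F := fun x u => (Set.Ioc (1:ℝ) (δ / x)).indicator (fun u => G (u * x) / G x) u)
    (f := fun u => u ^ (-α))
    (bound := fun u => C * u ^ (-β))
    (hF_meas := by
      refine Filter.Eventually.of_forall fun x => ?_
      exact (((tail_measurable.comp (measurable_id.mul_const x)).div_const _).indicator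
        measurableSet_Ioc).aestronglyMeasurable)
    (h_bound := by
      filter_upwards [Ioc_mem_nhdsGT hδ0] with x hx
      refine (ae_restrict_iff' measurableSet_Ioi).mpr (Filter.Eventually.of_forall ?_)
      intro u hu
      have hu0 : (0:ℝ) < u := lt_trans one_pos hu
      have hbnn : (0:ℝ) ≤ C * u ^ (-β) := by positivity
      by_cases hmem : u ∈ Set.Ioc (1:ℝ) (δ / x)
      · rw [Set.indicator_of_mem hmem]
        have hGx := hGpos x ⟨hx.1, le_trans hx.2 hδx₀⟩
        rw [Real.norm_eq_abs, abs_of_nonneg (div_nonneg (tail_nonneg _) (tail_nonneg _))]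
        rw [div_le_iff₀ hGx]
        refine hbd x ⟨hx.1, le_trans hx.2 hδx₀⟩ u hmem.1.le ?_
        calc u * x ≤ δ := by
              rw [← le_div_iff₀ hx.1]
              exact hmem.2
        _ ≤ x₀ := hδx₀
      · rw [Set.indicator_of_notMem hmem, Real.norm_eq_abs, abs_zero]
        exact hbnn)
    (bound_integrable := (integrableOn_Ioi_rpow_of_lt (by linarith) one_pos).const_mul C)
    (h_lim := by
      refine (ae_restrict_iff' measurableSet_Ioi).mpr (Filter.Eventually.of_forall ?_)
      intro u hu
      have hu0 : (0:ℝ) < u := lt_trans one_pos hu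
      refine Tendsto.congr' ?_ (ratio_tendsto hα0 hsv htail hu0)
      filter_upwards [Ioc_mem_nhdsGT (div_pos hδ0 hu0)] with x hx
      have hmem : u ∈ Set.Ioc (1:ℝ) (δ / x) := by
        refine ⟨hu, ?_⟩
        rw [le_div_iff₀ hx.1]
        calc u * x ≤ u * (δ / u) := mul_le_mul_of_nonneg_left hx.2 hu0.le
        _ = δ := by field_simp
      rw [Set.indicator_of_mem hmem])
  have hval : (∫ u in Set.Ioi (1:ℝ), u ^ (-α)) = 1 / (α - 1) := by
    rw [integral_Ioi_rpow_of_lt (by linarith) one_pos, Real.one_rpow]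
    rw [show (-α + 1 : ℝ) = -(α - 1) by ring, div_neg, neg_div, neg_neg]
  rw [hval] at hlim
  refine hlim.congr fun x => ?_
  rw [setIntegral_indicator measurableSet_Ioc,
    Set.inter_eq_self_of_subset_right (fun y hy => hy.1)]

end Karamata

section COV

variable {Λ : Measure ℝ}

lemma cov_small {b : ℝ} (hb : 0 < b) :
    ∫ s in Set.Ioc (0:ℝ) b, upperTail Λ s
      = b * ∫ u in Set.Ioc (0:ℝ) 1, upperTail Λ (u * b) := by
  have h := intervalIntegral.integral_comp_mul_right (a := (0:ℝ)) (b := (1:ℝ))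
    (f := upperTail Λ) hb.ne'
  rw [intervalIntegral.integral_of_le zero_le_one] at h
  rw [zero_mul, one_mul, intervalIntegral.integral_of_le hb.le] at h
  rw [h, smul_eq_mul]
  field_simp

lemma cov_large {b δ : ℝ} (hb : 0 < b) (hbδ : b ≤ δ) :
    ∫ s in Set.Ioc b δ, upperTail Λ s
      = b * ∫ u in Set.Ioc (1:ℝ) (δ / b), upperTail Λ (u * b) := by
  have h := intervalIntegral.integral_comp_mul_right (a := (1:ℝ)) (b := δ / b)
    (f := upperTail Λ) hb.ne'
  rw [intervalIntegral.integral_of_le (by rw [le_div_iff₀ hb]; linarith)] at h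
  rw [one_mul, div_mul_cancel₀ _ hb.ne', intervalIntegral.integral_of_le hbδ] at h
  rw [h, smul_eq_mul]
  field_simp

end COV


/-- **Limit of the centering.** With `c(t) = t (γ₊ − ∫_{(a(t),1]} y Λ(dy))` one has
`c(t)/a(t) → α/(1−α)` as `t ↓ 0`. -/
theorem centering_over_norming_limit
    (Λ : Measure ℝ) (α : ℝ) (ℓ : ℝ → ℝ)
    (hΛ0 : Λ (Set.Iic 0) = 0)
    (hint : (∫⁻ y, ENNReal.ofReal (min 1 (y ^ 2)) ∂Λ) < ⊤)
    (hα : α ∈ Set.Ioo (0:ℝ) 2) (hα1 : α ≠ 1)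
    (hsv : SlowlyVaryingAtZero ℓ)
    (htail : ∀ x : ℝ, 0 < x → upperTail Λ x = x ^ (-α) * ℓ x) :
    Tendsto (fun t : ℝ =>
        t * (gammaPlus Λ - ∫ y in Set.Ioc (normFn Λ t) 1, y ∂Λ) / normFn Λ t)
      (𝓝[>] (0:ℝ)) (𝓝 (α / (1 - α))) := by
  obtain ⟨hα0, hα2⟩ := hα
  set G := upperTail Λ with hGdef
  set a := normFn Λ with hadef
  have hT1 := t_tail_norm_tendsto_one hα0 hint hsv htail
  have hA := norm_tendsto_zero hα0 hint hsv htail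
  have hGpos_ev : ∀ᶠ x in 𝓝[>] (0:ℝ), 0 < G x :=
    (ev_pos hα0 hsv htail).mono fun x hx => hx.2
  rcases lt_or_gt_of_ne hα1 with hlt | hgt
  · -- case α < 1
    have hγfin := gamma_fin hα0 hint hsv htail hlt
    have hγ : gammaPlus Λ = ∫ y in Set.Ioc (0:ℝ) 1, y ∂Λ := if_pos hγfin
    have hK := (kar_small hα0 hint hsv htail hlt).comp hA
    have hcomb := hT1.mul (hK.sub_const 1)
    have hval : (1:ℝ) * (1 / (1 - α) - 1) = α / (1 - α) := by
      have hne : (1 - α : ℝ) ≠ 0 := by intro h; exact hα1 (by linarith)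
      field_simp
      ring
    rw [hval] at hcomb
    refine Tendsto.congr' ?_ hcomb
    filter_upwards [hA.eventually (Ioc_mem_nhdsGT one_pos),
      hA.eventually hGpos_ev, self_mem_nhdsWithin] with t hb hGb ht0
    simp only [Function.comp_apply] at *
    set b := a t with hbdef
    have hb0 : 0 < b := hb.1
    have hb1 : b ≤ 1 := hb.2
    set I := ∫ u in Set.Ioc (0:ℝ) 1, G (u * b) / G b with hIdef
    have hint1 : IntegrableOn (fun y : ℝ => y) (Set.Ioc (0:ℝ) b) Λ :=
      int_id_Ioc hα0 hint hsv htail hlt hb0 hb1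
    have hint2 : IntegrableOn (fun y : ℝ => y) (Set.Ioc b 1) Λ :=
      (int_id_Ioc hα0 hint hsv htail hlt one_pos le_rfl).mono_set
        (fun y hy => ⟨lt_trans hb0 hy.1, hy.2⟩)
    have hsplit : (∫ y in Set.Ioc (0:ℝ) 1, y ∂Λ)
        = (∫ y in Set.Ioc (0:ℝ) b, y ∂Λ) + ∫ y in Set.Ioc b 1, y ∂Λ := by
      rw [← Set.Ioc_union_Ioc_eq_Ioc hb0.le hb1,
        setIntegral_union (Set.Ioc_disjoint_Ioc_of_le le_rfl) measurableSet_Ioc hint1 hint2]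
    have h2 := bochner_small hα0 hint hsv htail hlt hb0 hb1
    have h3 := cov_small (Λ := Λ) hb0
    have h4 : (∫ u in Set.Ioc (0:ℝ) 1, G (u * b)) = G b * I := by
      rw [hIdef, integral_div]
      field_simp
      rw [mul_div_cancel_left₀ _ hGb.ne']; simp only [mul_comm]
    have hnum : gammaPlus Λ - ∫ y in Set.Ioc b 1, y ∂Λ = b * G b * (I - 1) := by
      rw [hγ, hsplit]
      have : (∫ y in Set.Ioc (0:ℝ) b, y ∂Λ) = b * G b * (I - 1) := by
        rw [h2, h3, h4]
        ring
      linarith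
    show (fun t : ℝ => t * G (a t) * ((∫ u in Set.Ioc (0:ℝ) 1, G (u * a t) / G (a t)) - 1)) t
        = t * (gammaPlus Λ - ∫ y in Set.Ioc (a t) 1, y ∂Λ) / a t
    simp only [← hbdef, ← hIdef]
    rw [hnum]
    field_simp
  · -- case α > 1
    have hγinf := gamma_inf hα0 hint hsv htail hgt
    have hγ : gammaPlus Λ = 0 := if_neg hγinf
    obtain ⟨δ, hδ0, hδ1, hGposδ, hKar⟩ := kar_large hα0 hint hsv htail hgt
    have hK := hKar.comp hA
    have hxGx := (xGx_atTop hα0 hint hsv htail hgt).comp hA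
    have hinv : Tendsto (fun t => (a t * G (a t))⁻¹) (𝓝[>] (0:ℝ)) (𝓝 0) :=
      hxGx.inv_tendsto_atTop
    have hta : Tendsto (fun t => t / a t) (𝓝[>] (0:ℝ)) (𝓝 0) := by
      have h := hT1.mul hinv
      rw [mul_zero] at h
      refine Tendsto.congr' ?_ h
      filter_upwards [hA.eventually hGpos_ev, hA.eventually self_mem_nhdsWithin]
        with t hG ha
      have ha0 : 0 < a t := ha
      field_simp
      exact mul_inv_cancel_right₀ hG.ne' t
    set Cδ : ℝ := ∫ s in Set.Ioc δ 1, G s with hCδdef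
    set K : ℝ → ℝ := fun t => ∫ u in Set.Ioc (1:ℝ) (δ / a t), G (u * a t) / G (a t)
      with hKdef
    have hcomb : Tendsto (fun t => -(t * G (a t)) - (t * G (a t)) * K t
        - (t / a t) * Cδ + (t / a t) * G 1) (𝓝[>] (0:ℝ))
        (𝓝 (-(1:ℝ) - 1 * (1 / (α - 1)) - 0 * Cδ + 0 * G 1)) :=
      ((hT1.neg.sub (hT1.mul hK)).sub (hta.mul_const Cδ)).add (hta.mul_const (G 1))
    have hval : (-(1:ℝ) - 1 * (1 / (α - 1)) - 0 * Cδ + 0 * G 1) = α / (1 - α) := by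
      have hne : (α - 1 : ℝ) ≠ 0 := by intro h; exact hα1 (by linarith)
      have hne' : (1 - α : ℝ) ≠ 0 := by intro h; exact hα1 (by linarith)
      field_simp
      ring
    rw [hval] at hcomb
    refine Tendsto.congr' ?_ hcomb
    filter_upwards [hA.eventually (Ioc_mem_nhdsGT hδ0), self_mem_nhdsWithin]
      with t hb ht0
    set b := a t with hbdef
    have hb0 : 0 < b := hb.1
    have hbδ : b ≤ δ := hb.2
    have hb1 : b ≤ 1 := le_trans hbδ hδ1
    have hGb : 0 < G b := hGposδ b hb
    have hbl := bochner_large hint hb0 hb1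
    have hsplitG : (∫ s in Set.Ioc b 1, G s)
        = (∫ s in Set.Ioc b δ, G s) + Cδ := by
      rw [hCδdef, ← setIntegral_union (Set.Ioc_disjoint_Ioc_of_le le_rfl) measurableSet_Ioc
        (G_int_mid hint hb0) (G_int_mid hint hδ0), Set.Ioc_union_Ioc_eq_Ioc hbδ hδ1]
    have hcov := cov_large (Λ := Λ) hb0 hbδ
    have h4 : (∫ u in Set.Ioc (1:ℝ) (δ / b), G (u * b)) = G b * K t := by
      rw [hKdef]
      simp only [← hbdef]
      rw [integral_div]
      field_simp
    have hnum : gammaPlus Λ - ∫ y in Set.Ioc b 1, y ∂Λ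
        = -(b * G b) - b * G b * K t - Cδ + G 1 := by
      rw [hγ, hbl, hsplitG, hcov, h4]
      ring
    show -(t * G (a t)) - (t * G (a t)) * K t - (t / a t) * Cδ + (t / a t) * G 1
        = t * (gammaPlus Λ - ∫ y in Set.Ioc (a t) 1, y ∂Λ) / a t
    simp only [← hbdef]
    rw [hnum]
    field_simp
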